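/- arXiv:1907.12475 — 3 statements merged into one kernel-verified Lean document; each statement's English description precedes it below -/
import Mathlib

section
/- Let m be a positive integer, 0 < ε < 1, 0 < δ < 1, and let G_1, …, G_m be independent identically distributed real-valued random variables on a probability space such that P(G_i < q) = 1 − ε and P(G_i = q) = 0 for a fixed real number q. Suppose j* = min{ j ∈ {1, …, m} : Σ_{k=0}^{j−1} C(m,k) (1−ε)^k ε^{m−k} ≥ 1 − δ } exists. Then the j*-th order statistic satisfies P(G_(j*) ≥ q) ≥ 1 − δ; that is, G_(j*) is an upper bound of the (1−ε)-quantile q with confidence at least 1 − δ. -/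
open MeasureTheory ProbabilityTheory

open scoped ENNReal

lemma sort_ge_of_count_le {m : ℕ} (f : Fin m → ℝ) (q : ℝ) (j : Fin m)
    (h : (Finset.univ.filter fun i => f i < q).card ≤ (j : ℕ)) :
    q ≤ f (Tuple.sort f j) := by
  by_contra hq
  push_neg at hq
  have hmono := Tuple.monotone_sort f
  have hsub : (Finset.Iic j).image (Tuple.sort f) ⊆
      Finset.univ.filter fun i => f i < q := by
    intro i hi
    simp only [Finset.mem_image, Finset.mem_Iic] at hi
    obtain ⟨k, hk, rfl⟩ := hi
    simp only [Finset.mem_filter, Finset.mem_univ, true_and]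
    exact lt_of_le_of_lt (hmono hk) hq
  have hcard : (j : ℕ) + 1 ≤ (Finset.univ.filter fun i => f i < q).card := by
    calc (j : ℕ) + 1 = (Finset.Iic j).card := (Fin.card_Iic j).symm
      _ = ((Finset.Iic j).image (Tuple.sort f)).card :=
        (Finset.card_image_of_injective _ (Tuple.sort f).injective).symm
      _ ≤ _ := Finset.card_le_card hsub
  omega


/-- With `G 0, …, G (m-1)` i.i.d. real random variables such that
`P(G i < q) = 1 − ε` and `P(G i = q) = 0`, suppose
`jstar` is the least index `j` (0-indexed; `j+1` in the paper's 1-indexed convention)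
such that `Σ_{k=0}^{j} C(m,k)(1−ε)^k ε^{m−k} ≥ 1 − δ`.  Then the corresponding order
statistic, realized via `Tuple.sort` as `G (Tuple.sort (fun i => G i ω) jstar) ω`,
satisfies `P(G_(jstar) ≥ q) ≥ 1 − δ`. -/
theorem prob_order_stat_jstar_ge_quantile
    {Ω : Type*} [MeasurableSpace Ω] (μ : Measure Ω) [IsProbabilityMeasure μ]
    (m : ℕ) (hm : 0 < m) (ε δ : ℝ) (hε0 : 0 < ε) (hε1 : ε < 1)
    (hδ0 : 0 < δ) (hδ1 : δ < 1) (q : ℝ)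
    (G : Fin m → Ω → ℝ) (hGmeas : ∀ i, Measurable (G i))
    (hindep : iIndepFun G μ)
    (hident : ∀ i j, IdentDistrib (G i) (G j) μ μ)
    (hlt : ∀ i, μ {ω | G i ω < q} = ENNReal.ofReal (1 - ε))
    (heq : ∀ i, μ {ω | G i ω = q} = 0)
    (jstar : Fin m)
    (hjstar : IsLeast {j : Fin m |
      1 - δ ≤ ∑ k ∈ Finset.range ((j : ℕ) + 1),
        (m.choose k : ℝ) * (1 - ε) ^ k * ε ^ (m - k)} jstar) :
    ENNReal.ofReal (1 - δ) ≤
      μ {ω | q ≤ G (Tuple.sort (fun i => G i ω) jstar) ω} := by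
  classical
  set A : Fin m → Set Ω := fun i => {ω | G i ω < q} with hA
  have hApre : ∀ i, A i = G i ⁻¹' Set.Iio q := fun i => rfl
  have hAmeas : ∀ i, MeasurableSet (A i) := fun i =>
    (hGmeas i) measurableSet_Iio
  have hAc : ∀ i, μ (A i)ᶜ = ENNReal.ofReal ε := by
    intro i
    rw [measure_compl (hAmeas i) (measure_ne_top μ _), hlt i, measure_univ]
    rw [show (1 : ℝ≥0∞) = ENNReal.ofReal 1 by simp,
      ← ENNReal.ofReal_sub _ (by linarith)]
    norm_num
  set E : Finset (Fin m) → Set Ω :=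
    fun S => ⋂ i, (if i ∈ S then A i else (A i)ᶜ) with hE
  have hEmeas : ∀ S, MeasurableSet (E S) := by
    intro S
    exact MeasurableSet.iInter fun i => by
      by_cases h : i ∈ S <;> simp [h, hAmeas i, (hAmeas i).compl]
  have hEmeasure : ∀ S : Finset (Fin m),
      μ (E S) = ENNReal.ofReal (1 - ε) ^ S.card * ENNReal.ofReal ε ^ (m - S.card) := by
    intro S
    have := hindep.meas_iInter (s := fun i => if i ∈ S then A i else (A i)ᶜ)
      (fun i => by
        by_cases h : i ∈ S
        · exact ⟨Set.Iio q, measurableSet_Iio, by simp [h, hApre]⟩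
        · exact ⟨Set.Ici q, measurableSet_Ici, by
            simp only [h, if_false, hApre]
            ext ω; simp [not_lt]⟩)
    rw [hE]; rw [this]
    have hconst : ∀ i : Fin m, μ ((fun i => if i ∈ S then A i else (A i)ᶜ) i)
        = (if i ∈ S then ENNReal.ofReal (1 - ε) else ENNReal.ofReal ε) := by
      intro i
      by_cases h : i ∈ S <;> simp [h, hlt i, hAc i, show μ (A i) = ENNReal.ofReal (1 - ε) from hlt i]
    rw [Finset.prod_congr rfl fun i _ => hconst i, Finset.prod_ite,
      Finset.prod_const, Finset.prod_const]
    congr 1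
    · congr 1
      simp
    · congr 1
      have : Finset.univ.filter (fun i => ¬ i ∈ S) = Sᶜ := by
        ext i; simp
      rw [this, Finset.card_compl, Fintype.card_fin]
  -- pairwise disjointness of the E S
  have hEdisj : ∀ S T : Finset (Fin m), S ≠ T → Disjoint (E S) (E T) := by
    intro S T hST
    rw [Set.disjoint_left]
    intro ω hS hT
    have hiff : ¬ ∀ i, i ∈ S ↔ i ∈ T := fun h => hST (Finset.ext h)
    push_neg at hiff
    obtain ⟨i, hi⟩ := hiff
    have h1 := Set.mem_iInter.mp hS i
    have h2 := Set.mem_iInter.mp hT i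
    by_cases h : i ∈ S <;> by_cases h' : i ∈ T
    · tauto
    · simp only [h, if_true, h', if_false] at h1 h2
      exact h2 h1
    · simp only [h, if_false, h', if_true] at h1 h2
      exact h1 h2
    · tauto
  set tgt : Set Ω := {ω | q ≤ G (Tuple.sort (fun i => G i ω) jstar) ω} with htgt
  have hsub : ∀ S : Finset (Fin m), S.card ≤ (jstar : ℕ) → E S ⊆ tgt := by
    intro S hS ω hω
    have hfilter : Finset.univ.filter (fun i => G i ω < q) = S := by
      ext i
      simp only [Finset.mem_filter, Finset.mem_univ, true_and]
      have h1 := Set.mem_iInter.mp hω i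
      by_cases h : i ∈ S
      · simp only [h, if_true] at h1
        exact ⟨fun _ => h, fun _ => h1⟩
      · simp only [h, if_false] at h1
        exact ⟨fun hx => absurd hx h1, fun hx => absurd hx h⟩
    exact sort_ge_of_count_le (fun i => G i ω) q jstar (by rw [hfilter]; exact hS)
  set T : Finset (Finset (Fin m)) :=
    Finset.univ.filter (fun S => S.card ≤ (jstar : ℕ)) with hTdef
  have hUsub : (⋃ S ∈ T, E S) ⊆ tgt := by
    intro ω hω
    obtain ⟨S, hS, hωS⟩ := Set.mem_iUnion₂.mp hω
    exact hsub S (by simpa [hTdef] using hS) hωS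
  have hmeasU : μ (⋃ S ∈ T, E S) = ∑ S ∈ T, μ (E S) :=
    measure_biUnion_finset (fun S _ U _ h => hEdisj S U h) (fun S _ => hEmeas S)
  have hT : T = (Finset.range ((jstar : ℕ) + 1)).biUnion
      (fun k => Finset.powersetCard k Finset.univ) := by
    ext S
    simp only [hTdef, Finset.mem_filter, Finset.mem_univ, true_and,
      Finset.mem_biUnion, Finset.mem_range, Finset.mem_powersetCard,
      Nat.lt_succ_iff]
    constructor
    · intro h
      exact ⟨S.card, h, Finset.subset_univ _, rfl⟩
    · rintro ⟨k, hk, -, hck⟩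
      omega
  have hsum : ∑ S ∈ T, μ (E S) = ∑ k ∈ Finset.range ((jstar : ℕ) + 1),
      (m.choose k : ℝ≥0∞) * ENNReal.ofReal (1 - ε) ^ k * ENNReal.ofReal ε ^ (m - k) := by
    rw [hT, Finset.sum_biUnion]
    · refine Finset.sum_congr rfl fun k _ => ?_
      have hterm : ∀ S ∈ Finset.powersetCard k (Finset.univ : Finset (Fin m)),
          μ (E S) = ENNReal.ofReal (1 - ε) ^ k * ENNReal.ofReal ε ^ (m - k) := by
        intro S hS
        rw [hEmeasure S, (Finset.mem_powersetCard.mp hS).2]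
      rw [Finset.sum_congr rfl hterm, Finset.sum_const, Finset.card_powersetCard,
        Finset.card_fin, nsmul_eq_mul, mul_assoc]
    · intro a _ b _ hab
      simp only [Function.onFun]
      rw [Finset.disjoint_left]
      intro S hSa hSb
      exact hab (((Finset.mem_powersetCard.mp hSa).2.symm).trans
        (Finset.mem_powersetCard.mp hSb).2)
  calc ENNReal.ofReal (1 - δ)
      ≤ ENNReal.ofReal (∑ k ∈ Finset.range ((jstar : ℕ) + 1),
          (m.choose k : ℝ) * (1 - ε) ^ k * ε ^ (m - k)) :=
        ENNReal.ofReal_le_ofReal hjstar.1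
    _ = ∑ k ∈ Finset.range ((jstar : ℕ) + 1),
          ENNReal.ofReal ((m.choose k : ℝ) * (1 - ε) ^ k * ε ^ (m - k)) := by
        rw [ENNReal.ofReal_sum_of_nonneg]
        intro k _
        exact mul_nonneg (mul_nonneg (Nat.cast_nonneg _)
          (pow_nonneg (by linarith) _)) (pow_nonneg hε0.le _)
    _ = ∑ k ∈ Finset.range ((jstar : ℕ) + 1),
          (m.choose k : ℝ≥0∞) * ENNReal.ofReal (1 - ε) ^ k * ENNReal.ofReal ε ^ (m - k) := by
        refine Finset.sum_congr rfl fun k _ => ?_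
        rw [ENNReal.ofReal_mul (mul_nonneg (Nat.cast_nonneg _) (pow_nonneg (by linarith) _)),
          ENNReal.ofReal_mul (Nat.cast_nonneg _),
          ENNReal.ofReal_pow (by linarith), ENNReal.ofReal_pow (by linarith),
          ENNReal.ofReal_natCast]
    _ = ∑ S ∈ T, μ (E S) := hsum.symm
    _ = μ (⋃ S ∈ T, E S) := hmeasU.symm
    _ ≤ μ tgt := measure_mono hUsub
end

section
/- Let m be a positive integer, 0 < ε < 1, 0 < δ < 1, and let G_1, …, G_m be independent identically distributed real-valued random variables on a probability space such that P(G_i < q) = 1 − ε and P(G_i = q) = 0 for a fixed real number q. Suppose j* = min{ j ∈ {1, …, m} : Σ_{k=0}^{j−1} C(m,k) (1−ε)^k ε^{m−k} ≥ 1 − δ } exists. Then for every j ∈ {1, …, m} with j < j*, one has P(G_(j) ≥ q) < 1 − δ; hence G_(j*) is the smallest order statistic that upper-bounds the (1−ε)-quantile q with confidence at least 1 − δ. -/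
open MeasureTheory ProbabilityTheory

/-- Combinatorial key: if more than `j` of the values `f i` are `< q`, then the
`j`-th order statistic is `< q`. -/
lemma sort_lt_of_card_filter {m : ℕ} (f : Fin m → ℝ) (q : ℝ) (j : Fin m)
    (h : (j : ℕ) < (Finset.univ.filter (fun i => f i < q)).card) :
    f (Tuple.sort f j) < q := by
  classical
  set σ := Tuple.sort f
  set T : Finset (Fin m) := Finset.univ.filter (fun k => f (σ k) < q) with hT
  have hcard : T.card = (Finset.univ.filter (fun i => f i < q)).card := by
    apply Finset.card_bij' (fun k _ => σ k) (fun i _ => σ.symm i)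
    · intro a ha
      simp only [hT, Finset.mem_filter, Finset.mem_univ, true_and] at ha ⊢
      exact ha
    · intro a ha
      simp only [hT, Finset.mem_filter, Finset.mem_univ, true_and] at ha ⊢
      simpa using ha
    · intro a _; simp
    · intro a _; simp
  have hTj : (j : ℕ) < T.card := hcard ▸ h
  -- there is some k ∈ T with j ≤ k
  obtain ⟨k, hkT, hjk⟩ : ∃ k ∈ T, j ≤ k := by
    by_contra hcon
    push_neg at hcon
    have hsub : T ⊆ Finset.Iio j := by
      intro k hk; exact Finset.mem_Iio.2 (hcon k hk)
    have := Finset.card_le_card hsub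
    rw [Fin.card_Iio] at this
    omega
  have hk : f (σ k) < q := by
    simpa [hT, Finset.mem_filter] using hkT
  exact lt_of_le_of_lt (Tuple.monotone_sort f hjk) hk

/-- With `G 0, …, G (m-1)` i.i.d. real random variables such that
`P(G i < q) = 1 − ε` and `P(G i = q) = 0`, suppose `jstar` is the least index `j`
(0-indexed; `j+1` in the paper's 1-indexed convention) such that
`Σ_{k=0}^{j} C(m,k)(1−ε)^k ε^{m−k} ≥ 1 − δ`.  Then for every `j < jstar`, the `j`-th
order statistic (realized via `Tuple.sort`) satisfies `P(G_(j) ≥ q) < 1 − δ`; hence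
`G_(jstar)` is the smallest order statistic upper-bounding the `(1−ε)`-quantile `q`
with confidence at least `1 − δ`. -/
theorem prob_order_stat_lt_jstar_lt_confidence
    {Ω : Type*} [MeasurableSpace Ω] (μ : Measure Ω) [IsProbabilityMeasure μ]
    (m : ℕ) (hm : 0 < m) (ε δ : ℝ) (hε0 : 0 < ε) (hε1 : ε < 1)
    (hδ0 : 0 < δ) (hδ1 : δ < 1) (q : ℝ)
    (G : Fin m → Ω → ℝ) (hGmeas : ∀ i, Measurable (G i))
    (hindep : iIndepFun G μ)
    (hident : ∀ i j, IdentDistrib (G i) (G j) μ μ)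
    (hlt : ∀ i, μ {ω | G i ω < q} = ENNReal.ofReal (1 - ε))
    (heq : ∀ i, μ {ω | G i ω = q} = 0)
    (jstar : Fin m)
    (hjstar : IsLeast {j : Fin m |
      1 - δ ≤ ∑ k ∈ Finset.range ((j : ℕ) + 1),
        (m.choose k : ℝ) * (1 - ε) ^ k * ε ^ (m - k)} jstar) :
    ∀ j : Fin m, j < jstar →
      μ {ω | q ≤ G (Tuple.sort (fun i => G i ω) j) ω} < ENNReal.ofReal (1 - δ) := by
  classical
  intro j hj
  have hε1' : (0:ℝ) ≤ 1 - ε := by linarith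
  -- the partial sum at j is < 1 - δ
  have hSj : ∑ k ∈ Finset.range ((j : ℕ) + 1),
      (m.choose k : ℝ) * (1 - ε) ^ k * ε ^ (m - k) < 1 - δ := by
    by_contra hcon
    push_neg at hcon
    exact absurd (hjstar.2 hcon) (not_le.mpr hj)
  -- events
  set A : Fin m → Set Ω := fun i => {ω | G i ω < q} with hA
  have hAmeas : ∀ i, MeasurableSet (A i) := fun i => (hGmeas i) measurableSet_Iio
  have hAc : ∀ i, μ (A i)ᶜ = ENNReal.ofReal ε := by
    intro i
    rw [prob_compl_eq_one_sub (hAmeas i), hlt i]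
    rw [← ENNReal.ofReal_one, ← ENNReal.ofReal_sub _ hε1']
    norm_num
  -- E S : exactly the indices in S satisfy G i ω < q
  set E : Finset (Fin m) → Set Ω :=
    fun S => ⋂ i, (if i ∈ S then A i else (A i)ᶜ) with hE
  have hEmeas : ∀ S, MeasurableSet (E S) := by
    intro S
    apply MeasurableSet.iInter
    intro i
    by_cases h : i ∈ S <;> simp [h, hAmeas i, (hAmeas i).compl]
  have hEmem : ∀ S ω, ω ∈ E S ↔ Finset.univ.filter (fun i => G i ω < q) = S := by
    intro S ω
    simp only [hE, Set.mem_iInter]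
    constructor
    · intro h
      ext i
      have := h i
      by_cases hi : i ∈ S <;> simp [hi, hA] at this <;>
        simp [hi, Finset.mem_filter, this]
    · intro h i
      by_cases hi : i ∈ S <;> simp [hi] <;>
        [skip; skip] <;> {
          have := Finset.ext_iff.mp h i
          simp [Finset.mem_filter, hi] at this
          simpa [hA, hi] using this }
  -- probability of E S
  have hES : ∀ S : Finset (Fin m),
      μ (E S) = ENNReal.ofReal (1 - ε) ^ S.card * ENNReal.ofReal ε ^ (m - S.card) := by
    intro S
    have hmeas : ∀ i, MeasurableSet[MeasurableSpace.comap (G i) inferInstance]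
        (if i ∈ S then A i else (A i)ᶜ) := by
      intro i
      have h1 : MeasurableSet[MeasurableSpace.comap (G i) inferInstance] (A i) :=
        ⟨Set.Iio q, measurableSet_Iio, rfl⟩
      by_cases h : i ∈ S <;> simp [h, h1, h1.compl]
    rw [hE]
    rw [hindep.meas_iInter hmeas]
    rw [← Finset.prod_sdiff (Finset.subset_univ S)]
    have h1 : ∏ i ∈ S, μ (if i ∈ S then A i else (A i)ᶜ)
        = ENNReal.ofReal (1 - ε) ^ S.card := by
      rw [Finset.prod_congr rfl (fun i hi => by rw [if_pos hi, hlt i]),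
        Finset.prod_const]
    have h2 : ∏ i ∈ Finset.univ \ S, μ (if i ∈ S then A i else (A i)ᶜ)
        = ENNReal.ofReal ε ^ (m - S.card) := by
      rw [Finset.prod_congr rfl (fun i hi => by
        rw [if_neg (Finset.mem_sdiff.mp hi).2, hAc i]), Finset.prod_const,
        Finset.card_sdiff_of_subset (Finset.subset_univ S)]
      simp
    rw [h1, h2, mul_comm]
  -- the event that at most j indices satisfy G i ω < q
  set T : Finset (Finset (Fin m)) :=
    (Finset.range ((j : ℕ) + 1)).biUnion (fun k => Finset.powersetCard k Finset.univ)
    with hTdef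
  have hTmem : ∀ S : Finset (Fin m), S ∈ T ↔ S.card ≤ (j : ℕ) := by
    intro S
    simp only [hTdef, Finset.mem_biUnion, Finset.mem_range, Finset.mem_powersetCard]
    constructor
    · rintro ⟨k, hk, -, rfl⟩; omega
    · intro h; exact ⟨S.card, by omega, Finset.subset_univ S, rfl⟩
  have hBeq : {ω | (Finset.univ.filter (fun i => G i ω < q)).card ≤ (j : ℕ)}
      = ⋃ S ∈ T, E S := by
    ext ω
    simp only [Set.mem_setOf_eq, Set.mem_iUnion]
    constructor
    · intro h
      exact ⟨Finset.univ.filter (fun i => G i ω < q), (hTmem _).2 h, (hEmem _ ω).2 rfl⟩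
    · rintro ⟨S, hS, hωS⟩
      rw [hEmem S ω] at hωS
      rw [hωS]
      exact (hTmem S).1 hS
  -- disjointness
  have hdisj : (T : Set (Finset (Fin m))).PairwiseDisjoint E := by
    intro S _ S' _ hSS'
    rw [Function.onFun, Set.disjoint_left]
    intro ω h1 h2
    rw [hEmem S ω] at h1
    rw [hEmem S' ω] at h2
    exact hSS' (h1 ▸ h2)
  -- measure of the union
  have hmeasB : μ (⋃ S ∈ T, E S) = ∑ S ∈ T,
      ENNReal.ofReal (1 - ε) ^ S.card * ENNReal.ofReal ε ^ (m - S.card) := by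
    rw [measure_biUnion_finset hdisj (fun S _ => hEmeas S)]
    exact Finset.sum_congr rfl (fun S _ => hES S)
  -- compute the sum
  have hsum : ∑ S ∈ T, ENNReal.ofReal (1 - ε) ^ S.card * ENNReal.ofReal ε ^ (m - S.card)
      = ENNReal.ofReal (∑ k ∈ Finset.range ((j : ℕ) + 1),
          (m.choose k : ℝ) * (1 - ε) ^ k * ε ^ (m - k)) := by
    rw [hTdef, Finset.sum_biUnion]
    · rw [ENNReal.ofReal_sum_of_nonneg (fun k _ => by positivity)]
      apply Finset.sum_congr rfl
      intro k _
      have : ∀ S ∈ Finset.powersetCard k (Finset.univ : Finset (Fin m)),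
          ENNReal.ofReal (1 - ε) ^ S.card * ENNReal.ofReal ε ^ (m - S.card)
          = ENNReal.ofReal (1 - ε) ^ k * ENNReal.ofReal ε ^ (m - k) := by
        intro S hS
        rw [(Finset.mem_powersetCard.mp hS).2]
      rw [Finset.sum_congr rfl this, Finset.sum_const, Finset.card_powersetCard,
        Finset.card_univ, Fintype.card_fin, nsmul_eq_mul]
      rw [ENNReal.ofReal_mul (by positivity), ENNReal.ofReal_mul (by positivity),
        ENNReal.ofReal_natCast, ENNReal.ofReal_pow hε1', ENNReal.ofReal_pow hε0.le,
        mul_assoc]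
    · intro a _ b _ hab
      rw [Function.onFun, Finset.disjoint_left]
      intro S hSa hSb
      rw [Finset.mem_powersetCard] at hSa hSb
      exact hab (hSa.2 ▸ hSb.2)
  -- inclusion
  have hincl : {ω | q ≤ G (Tuple.sort (fun i => G i ω) j) ω}
      ⊆ {ω | (Finset.univ.filter (fun i => G i ω < q)).card ≤ (j : ℕ)} := by
    intro ω hω
    simp only [Set.mem_setOf_eq] at hω ⊢
    by_contra hcon
    push_neg at hcon
    exact absurd (sort_lt_of_card_filter (fun i => G i ω) q j hcon) (not_lt.mpr hω)
  calc μ {ω | q ≤ G (Tuple.sort (fun i => G i ω) j) ω}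
      ≤ μ {ω | (Finset.univ.filter (fun i => G i ω < q)).card ≤ (j : ℕ)} :=
        measure_mono hincl
    _ = ENNReal.ofReal (∑ k ∈ Finset.range ((j : ℕ) + 1),
          (m.choose k : ℝ) * (1 - ε) ^ k * ε ^ (m - k)) := by rw [hBeq, hmeasB, hsum]
    _ < ENNReal.ofReal (1 - δ) := by
        apply (ENNReal.ofReal_lt_ofReal_iff (by linarith)).mpr hSj
end

section
/- Let d be a positive integer, M ∈ ℂ^{d×d} a Hermitian matrix, ĥ ∈ ℂ^d, B ∈ ℂ^{d×d}, and let H = [ĥ B] ∈ ℂ^{d×(d+1)} be the matrix whose first column is ĥ and whose remaining columns are B. Let σ² > 0 and λ ≥ 0, and let Q ∈ ℂ^{(d+1)×(d+1)} be the block diagonal Hermitian matrix with top-left entry λ + σ² and lower-right block −λ I_d. If H^H M H − Q is positive semidefinite, then for every u ∈ ℂ^d with ‖u‖₂ ≤ 1, the real number (ĥ + B u)^H M (ĥ + B u) is at least σ². -/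
open Matrix
open scoped ComplexOrder

/-- **S-procedure, sufficiency direction.** Let `M ∈ ℂ^{d×d}` be Hermitian,
`ĥ ∈ ℂ^d`, `B ∈ ℂ^{d×d}`, and `H = [ĥ B] ∈ ℂ^{d×(d+1)}` (first column `ĥ`, remaining
columns `B`).  Let `σ² > 0`, `λ ≥ 0`, and `Q` the Hermitian block-diagonal matrix with
top-left entry `λ + σ²` and lower-right block `−λ I_d`.  If `H^H M H − Q ⪰ 0`, then for
every `u ∈ ℂ^d` with `‖u‖₂ ≤ 1`, the real number `(ĥ + Bu)^H M (ĥ + Bu)` is at least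
`σ²`. -/
theorem s_procedure_sufficiency
    (d : ℕ) (hd : 0 < d)
    (M : Matrix (Fin d) (Fin d) ℂ) (hM : M.IsHermitian)
    (hhat : Fin d → ℂ) (B : Matrix (Fin d) (Fin d) ℂ)
    (σsq lam : ℝ) (hσ : 0 < σsq) (hlam : 0 ≤ lam)
    (H : Matrix (Fin d) (Fin (d + 1)) ℂ)
    (hH : H = Matrix.of fun i => Fin.cons (hhat i) (B i))
    (Q : Matrix (Fin (d + 1)) (Fin (d + 1)) ℂ)
    (hQ : Q = Matrix.of fun i j =>
      if i = 0 ∧ j = 0 then ((lam + σsq : ℝ) : ℂ)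
      else if i = j then -(lam : ℂ) else 0)
    (hPSD : (Hᴴ * M * H - Q).PosSemidef) :
    ∀ u : Fin d → ℂ, Real.sqrt (∑ i, ‖u i‖ ^ 2) ≤ 1 →
      σsq ≤ (star (hhat + B *ᵥ u) ⬝ᵥ M *ᵥ (hhat + B *ᵥ u)).re ∧
      (star (hhat + B *ᵥ u) ⬝ᵥ M *ᵥ (hhat + B *ᵥ u)).im = 0 := by
  intro u hu
  set w : Fin d → ℂ := hhat + B *ᵥ u with hw
  set v : Fin (d + 1) → ℂ := Fin.cons 1 u with hv
  -- H *ᵥ v = w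
  have hHv : H *ᵥ v = w := by
    funext i
    simp [hH, hv, hw, Matrix.mulVec, dotProduct, Fin.sum_univ_succ]
  -- norm bound
  have hS : ∑ i, ‖u i‖ ^ 2 ≤ 1 := by
    by_contra h
    push_neg at h
    have h1 : (1 : ℝ) < Real.sqrt (∑ i, ‖u i‖ ^ 2) := by
      have := Real.sqrt_lt_sqrt (by norm_num) h
      simpa using this
    linarith
  set S : ℝ := ∑ i, ‖u i‖ ^ 2 with hSdef
  have hS0 : 0 ≤ S := Finset.sum_nonneg fun i _ => sq_nonneg _
  -- quadratic form of Q
  have hQv : star v ⬝ᵥ Q *ᵥ v = (((lam + σsq) - lam * S : ℝ) : ℂ) := by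
    have : ∀ i, (Q *ᵥ v) i = (Fin.cons ((lam + σsq : ℝ) : ℂ) (fun k => -(lam : ℂ) * u k) : Fin (d+1) → ℂ) i := by
      intro i
      refine Fin.cases ?_ (fun k => ?_) i
      · simp only [hQ, hv, Matrix.mulVec, dotProduct, Matrix.of_apply,
          Fin.sum_univ_succ, Fin.cons_zero, Fin.cons_succ]
        rw [Finset.sum_eq_zero fun x _ => by simp [Fin.succ_ne_zero x, (Fin.succ_ne_zero x).symm]]
        simp
      · simp only [hQ, hv, Matrix.mulVec, dotProduct, Matrix.of_apply,
          Fin.sum_univ_succ, Fin.cons_zero, Fin.cons_succ]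
        simp only [Fin.succ_ne_zero k, if_false, and_true, ite_false, false_and, if_false,
          Fin.succ_inj, zero_mul, zero_add, ite_mul]
        rw [Finset.sum_eq_single k]
        · simp
        · intro b _ hb
          simp [Ne.symm hb]
        · simp
    simp only [dotProduct, this]
    rw [Fin.sum_univ_succ]
    simp only [hv, Fin.cons_zero, Fin.cons_succ, Pi.star_apply, star_one, one_mul]
    have : ∀ k, star (u k) * (-(lam : ℂ) * u k) = -(lam : ℂ) * ((‖u k‖ ^ 2 : ℝ) : ℂ) := by
      intro k
      have h2 : star (u k) * u k = ((‖u k‖ ^ 2 : ℝ) : ℂ) := by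
        rw [Complex.star_def, mul_comm, Complex.mul_conj]
        push_cast [Complex.normSq_eq_norm_sq]
        ring
      calc star (u k) * (-(lam : ℂ) * u k) = -(lam : ℂ) * (star (u k) * u k) := by ring
        _ = -(lam : ℂ) * ((‖u k‖ ^ 2 : ℝ) : ℂ) := by rw [h2]
    rw [Finset.sum_congr rfl fun k _ => this k, ← Finset.mul_sum]
    push_cast [hSdef]
    ring
  -- quadratic form of HᴴMH
  have hHMH : star v ⬝ᵥ (Hᴴ * M * H) *ᵥ v = star w ⬝ᵥ M *ᵥ w := by
    rw [← Matrix.mulVec_mulVec, ← Matrix.mulVec_mulVec, dotProduct_mulVec (star v),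
      ← Matrix.star_mulVec, hHv, dotProduct_mulVec]
  -- PSD inequality
  have hq := hPSD.dotProduct_mulVec_nonneg v
  rw [Matrix.sub_mulVec, dotProduct_sub, hHMH, hQv] at hq
  rw [Complex.le_def] at hq
  simp only [Complex.zero_re, Complex.sub_re, Complex.ofReal_re, Complex.zero_im,
    Complex.sub_im, Complex.ofReal_im, sub_zero] at hq
  obtain ⟨hre, him⟩ := hq
  constructor
  · have : lam * S ≤ lam * 1 := mul_le_mul_of_nonneg_left hS hlam
    rw [hw] at *
    linarith
  · exact him.symm
end
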